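/- Let z = (z_1, z_2, …) and w = (w_1, w_2, …) be elements of ℓ^2(ℕ, ℂ) with ‖z‖ < 1 and ‖w‖ < 1. Then ⟨z,w⟩ = Σ_{j≥1} z_j \overline{w_j} satisfies |⟨z,w⟩| < 1, the family α ↦ (|α|!/α!) z^α \overline{w}^α, indexed by α ∈ ℓ, is summable, and Σ_{α ∈ ℓ} (|α|!/α!) z^α \overline{w}^α = (1 − ⟨z, w⟩)^{−1}. -/

import Mathlib

open Finset Topology


noncomputable def Fm {R : Type*} [CommSemiring R] (u : ℕ → R) (α : ℕ →₀ ℕ) : R :=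
  (α.multinomial : R) * α.prod fun j m => u j ^ m

lemma nat_multinomial_subset {s : Finset ℕ} (α : ℕ →₀ ℕ) (h : α.support ⊆ s) :
    Nat.multinomial s α = α.multinomial := by
  rw [Finsupp.multinomial_eq, Nat.multinomial, Nat.multinomial,
    Finset.sum_subset h (by simp), Finset.prod_subset h (fun x _ hx => by rw [Finsupp.notMem_support_iff.1 hx]; rfl)]

lemma fm_finite {R : Type*} [CommSemiring R] (u : ℕ → R) (s : Finset ℕ) (n : ℕ) :
    (∑ j ∈ s, u j) ^ n = ∑ α ∈ s.finsuppAntidiag n, Fm u α := by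
  classical
  rw [Finset.sum_pow_eq_sum_piAntidiag]
  refine Finset.sum_bij' (fun k hk => Finsupp.onFinset s k ?_) (fun α _ => ⇑α) ?_ ?_ ?_ ?_ ?_
  · intro a ha
    exact (Finset.mem_piAntidiag.1 hk).2 a ha
  · intro k hk
    rw [Finset.mem_finsuppAntidiag]
    refine ⟨?_, ?_⟩
    · simpa using (Finset.mem_piAntidiag.1 hk).1
    · exact Finsupp.support_onFinset_subset
  · intro α hα
    rw [Finset.mem_finsuppAntidiag] at hα
    rw [Finset.mem_piAntidiag]
    exact ⟨hα.1, fun i hi => hα.2 (Finsupp.mem_support_iff.2 hi)⟩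
  · intro k hk; rfl
  · intro α hα; ext j; rfl
  · intro k hk
    have hsupp : (Finsupp.onFinset s k ((Finset.mem_piAntidiag.1 hk).2) : ℕ →₀ ℕ).support ⊆ s :=
      Finsupp.support_onFinset_subset
    rw [Fm, ← nat_multinomial_subset _ hsupp,
      Finsupp.prod_of_support_subset _ hsupp _ (by simp)]
    rfl


lemma cast_multinomial_c (α : ℕ →₀ ℕ) :
    ((α.sum fun _ n => n).factorial : ℂ) / (α.prod fun _ n => (n.factorial : ℂ))
      = (α.multinomial : ℂ) := by
  have hspec := Nat.multinomial_spec α.support α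
  have h1 : (α.prod fun _ n => (n.factorial : ℂ)) = ((∏ i ∈ α.support, (α i).factorial : ℕ) : ℂ) := by
    rw [Finsupp.prod, Nat.cast_prod]
  have hpos : 0 < ∏ i ∈ α.support, (α i).factorial :=
    Finset.prod_pos fun i _ => Nat.factorial_pos _
  have h0 : (α.prod fun _ n => (n.factorial : ℂ)) ≠ 0 := by
    rw [h1]; exact_mod_cast hpos.ne'
  rw [div_eq_iff h0, h1, Finsupp.multinomial_eq, ← Nat.cast_mul]
  have : (α.sum fun _ n => n) = ∑ i ∈ α.support, α i := rfl
  rw [this, ← hspec, mul_comm]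

lemma norm_Fm (u : ℕ → ℂ) (α : ℕ →₀ ℕ) : ‖Fm u α‖ = Fm (fun j => ‖u j‖) α := by
  rw [Fm, Fm, norm_mul, Complex.norm_natCast, Finsupp.prod, Finsupp.prod, norm_prod]
  simp [norm_pow]

lemma Fm_nonneg (v : ℕ → ℝ) (hv : ∀ j, 0 ≤ v j) (α : ℕ →₀ ℕ) : 0 ≤ Fm v α := by
  refine mul_nonneg (Nat.cast_nonneg _) (Finset.prod_nonneg fun i _ => pow_nonneg (hv i) _)

lemma summable_Fm_real (v : ℕ → ℝ) (hv0 : ∀ j, 0 ≤ v j) (hv : Summable v)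
    (hr : (∑' j, v j) < 1) : Summable (Fm v) := by
  classical
  set r := ∑' j, v j with hrdef
  have r0 : 0 ≤ r := tsum_nonneg fun j => hv0 j
  refine summable_of_sum_le (c := (1 - r)⁻¹) (fun α => Fm_nonneg v hv0 α) ?_
  intro T
  set s : Finset ℕ := T.sup Finsupp.support with hs
  set n₀ : ℕ := T.sup fun α => α.sum fun _ m => m with hn0
  have hsub : T ⊆ (Finset.range (n₀ + 1)).biUnion fun n => s.finsuppAntidiag n := by
    intro α hα
    rw [Finset.mem_biUnion]
    refine ⟨α.sum fun _ m => m, Finset.mem_range.2 (Nat.lt_succ_of_le (Finset.le_sup (f := fun α : ℕ →₀ ℕ => α.sum fun _ m => m) hα)), ?_⟩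
    rw [Finset.mem_finsuppAntidiag]
    have hss : α.support ⊆ s := Finset.le_sup hα
    constructor
    · rw [← Finset.sum_subset hss (fun x _ hx => Finsupp.notMem_support_iff.1 hx)]
      rfl
    · exact hss
  have hdisj : Set.PairwiseDisjoint (↑(Finset.range (n₀ + 1)) : Set ℕ)
      (fun n => s.finsuppAntidiag n) := by
    intro m _ n _ hmn
    refine Finset.disjoint_left.2 fun α hm hn => hmn ?_
    rw [Finset.mem_finsuppAntidiag] at hm hn
    rw [← hm.1, ← hn.1]
  calc ∑ α ∈ T, Fm v α
      ≤ ∑ α ∈ (Finset.range (n₀ + 1)).biUnion fun n => s.finsuppAntidiag n, Fm v α :=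
        Finset.sum_le_sum_of_subset_of_nonneg hsub fun α _ _ => Fm_nonneg v hv0 α
    _ = ∑ n ∈ Finset.range (n₀ + 1), ∑ α ∈ s.finsuppAntidiag n, Fm v α :=
        Finset.sum_biUnion hdisj
    _ = ∑ n ∈ Finset.range (n₀ + 1), (∑ j ∈ s, v j) ^ n := by
        refine Finset.sum_congr rfl fun n _ => (fm_finite v s n).symm
    _ ≤ ∑ n ∈ Finset.range (n₀ + 1), r ^ n := by
        refine Finset.sum_le_sum fun n _ => ?_
        exact pow_le_pow_left₀ (Finset.sum_nonneg fun j _ => hv0 j)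
          (Summable.sum_le_tsum s (fun j _ => hv0 j) hv) n
    _ ≤ ∑' n, r ^ n := Summable.sum_le_tsum _ (fun n _ => pow_nonneg r0 n)
          (summable_geometric_of_lt_one r0 hr)
    _ = (1 - r)⁻¹ := tsum_geometric_of_lt_one r0 hr

lemma tendsto_tsum_exhaustion {f : (ℕ →₀ ℕ) → ℂ} (hf : Summable fun α => ‖f α‖) :
    Filter.Tendsto (fun s : Finset ℕ => ∑' α : {α : ℕ →₀ ℕ | α.support ⊆ s}, f α)
      Filter.atTop (𝓝 (∑' α, f α)) := by
  have hf' : Summable f := hf.of_norm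
  rw [Metric.tendsto_atTop]
  intro ε hε
  -- choose a finset F₀ with small tail
  obtain ⟨F₀, hF₀⟩ : ∃ F₀ : Finset (ℕ →₀ ℕ), (∑' α : {α // α ∉ F₀}, ‖f α‖) < ε := by
    have h1 := Metric.tendsto_atTop.1 hf.hasSum ε hε
    obtain ⟨F₀, hF⟩ := h1
    refine ⟨F₀, ?_⟩
    have h2 := hF F₀ le_rfl
    have h3 := Summable.sum_add_tsum_subtype_compl hf F₀
    have h4 : (∑' α : {α // α ∉ F₀}, ‖f α‖) = (∑' α, ‖f α‖) - ∑ α ∈ F₀, ‖f α‖ := by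
      rw [← h3]; ring
    rw [h4]
    have h5 : |∑ α ∈ F₀, ‖f α‖ - ∑' α, ‖f α‖| < ε := by
      rw [← Real.dist_eq]; exact h2
    have := abs_lt.1 h5
    linarith [this.1, this.2]
  refine ⟨F₀.sup Finsupp.support, fun s hs => ?_⟩
  have hcompl := Summable.tsum_subtype_add_tsum_subtype_compl hf' {α : ℕ →₀ ℕ | α.support ⊆ s}
  rw [dist_eq_norm]
  have heq : (∑' α : {α : ℕ →₀ ℕ | α.support ⊆ s}, f α) - (∑' α, f α)
      = -∑' α : ↥{α : ℕ →₀ ℕ | α.support ⊆ s}ᶜ, f α := by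
    rw [← hcompl]; ring
  rw [heq, norm_neg]
  have hnorm : ‖∑' α : ↥{α : ℕ →₀ ℕ | α.support ⊆ s}ᶜ, f α‖
      ≤ ∑' α : ↥{α : ℕ →₀ ℕ | α.support ⊆ s}ᶜ, ‖f α‖ :=
    norm_tsum_le_tsum_norm (hf.subtype _)
  refine lt_of_le_of_lt (hnorm.trans ?_) hF₀
  -- embed the complement into {α // α ∉ F₀}
  have hemb : ∀ α : ↥{α : ℕ →₀ ℕ | α.support ⊆ s}ᶜ, (α : ℕ →₀ ℕ) ∉ F₀ := by
    rintro ⟨α, hα⟩ hmem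
    exact hα (le_trans (Finset.le_sup (f := Finsupp.support) hmem) hs)
  refine Summable.tsum_le_tsum_of_inj (fun α => ⟨α, hemb α⟩) ?_ (fun _ _ => norm_nonneg _)
    (fun _ => le_rfl) (hf.subtype _) (hf.subtype _)
  intro a b hab
  simpa [Subtype.ext_iff] using hab

set_option maxHeartbeats 1000000 in
lemma tsum_subset_eval (u : ℕ → ℂ) (hFsum : Summable (Fm u)) (s : Finset ℕ)
    (hlt : ‖∑ j ∈ s, u j‖ < 1) :
    (∑' α : {α : ℕ →₀ ℕ | α.support ⊆ s}, Fm u α) = (1 - ∑ j ∈ s, u j)⁻¹ := by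
  classical
  let e : (Σ n : ℕ, ↥(s.finsuppAntidiag n)) ≃ ↥{α : ℕ →₀ ℕ | α.support ⊆ s} :=
    { toFun := fun p => ⟨p.2.1, (Finset.mem_finsuppAntidiag.1 p.2.2).2⟩
      invFun := fun q => ⟨s.sum ⇑q.1, ⟨q.1, Finset.mem_finsuppAntidiag.2 ⟨rfl, q.2⟩⟩⟩
      left_inv := by
        rintro ⟨n, α, hα⟩
        have h := (Finset.mem_finsuppAntidiag.1 hα).1
        subst h
        rfl
      right_inv := fun q => rfl }
  have hsub : Summable fun α : ↥{α : ℕ →₀ ℕ | α.support ⊆ s} => Fm u ↑α :=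
    hFsum.subtype _
  have hsig : Summable fun p : Σ n : ℕ, ↥(s.finsuppAntidiag n) => Fm u ↑p.2 :=
    (Equiv.summable_iff e).2 hsub
  have h1 : (∑' α : {α : ℕ →₀ ℕ | α.support ⊆ s}, Fm u α)
      = ∑' p : Σ n : ℕ, ↥(s.finsuppAntidiag n), Fm u ↑p.2 :=
    (Equiv.tsum_eq e (fun α : ↥{α : ℕ →₀ ℕ | α.support ⊆ s} => Fm u ↑α)).symm
  rw [h1, hsig.tsum_sigma]
  have h2 : ∀ n : ℕ, (∑' α : ↥(s.finsuppAntidiag n), Fm u ↑α) = (∑ j ∈ s, u j) ^ n := by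
    intro n
    rw [Finset.tsum_subtype, ← fm_finite]
  rw [tsum_congr h2]
  exact tsum_geometric_of_norm_lt_one hlt

theorem aux_main (u : ℕ → ℂ) (hv : Summable fun j => ‖u j‖) (hr : (∑' j, ‖u j‖) < 1) :
    Summable (Fm u) ∧ (∑' α, Fm u α) = (1 - ∑' j, u j)⁻¹ := by
  have hu : Summable u := hv.of_norm
  have hGsum := summable_Fm_real (fun j => ‖u j‖) (fun j => norm_nonneg _) hv hr
  have hnormeq : (fun α => ‖Fm u α‖) = Fm (fun j => ‖u j‖) := funext (norm_Fm u)
  have hFnorm : Summable fun α => ‖Fm u α‖ := by rw [hnormeq]; exact hGsum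
  have hFsum : Summable (Fm u) := hFnorm.of_norm
  have hb : ∀ s : Finset ℕ, ‖∑ j ∈ s, u j‖ < 1 := fun s =>
    lt_of_le_of_lt ((norm_sum_le _ _).trans
      (Summable.sum_le_tsum s (fun j _ => norm_nonneg _) hv)) hr
  have ht : ‖∑' j, u j‖ < 1 := lt_of_le_of_lt (norm_tsum_le_tsum_norm hv) hr
  have hne : (1 : ℂ) - ∑' j, u j ≠ 0 := by
    refine sub_ne_zero.2 fun h => ?_
    rw [← h] at ht
    simp at ht
  have h1 := tendsto_tsum_exhaustion hFnorm
  have h2 : ∀ s : Finset ℕ, (∑' α : {α : ℕ →₀ ℕ | α.support ⊆ s}, Fm u α)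
      = (1 - ∑ j ∈ s, u j)⁻¹ := fun s => tsum_subset_eval u hFsum s (hb s)
  have h1' : Filter.Tendsto (fun s : Finset ℕ => (1 - ∑ j ∈ s, u j)⁻¹)
      Filter.atTop (𝓝 (∑' α, Fm u α)) := h1.congr h2
  have h3 : Filter.Tendsto (fun s : Finset ℕ => (1 - ∑ j ∈ s, u j)⁻¹)
      Filter.atTop (𝓝 ((1 - ∑' j, u j)⁻¹)) :=
    (tendsto_const_nhds.sub hu.hasSum).inv₀ hne
  exact ⟨hFsum, tendsto_nhds_unique h1' h3⟩



/-- The reproducing kernel of the Arveson space on the unit ball of `ℓ₂`: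
for `‖z‖ < 1`, `‖w‖ < 1` one has `|⟨z,w⟩| < 1` and
`Σ_{α ∈ ℓ} (|α|!/α!) z^α conj(w)^α = (1 − ⟨z,w⟩)⁻¹`. -/
theorem stmt6 (z w : ℕ → ℂ)
    (hz : Summable fun j => ‖z j‖ ^ 2) (hw : Summable fun j => ‖w j‖ ^ 2)
    (hz1 : (∑' j : ℕ, ‖z j‖ ^ 2) < 1) (hw1 : (∑' j : ℕ, ‖w j‖ ^ 2) < 1) :
    ‖∑' j : ℕ, z j * (starRingEnd ℂ) (w j)‖ < 1 ∧
    Summable (fun α : ℕ →₀ ℕ =>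
      (((α.sum fun _ n => n).factorial : ℂ) / (α.prod fun _ n => (n.factorial : ℂ))) *
        (α.prod fun j n => (z j) ^ n) * (α.prod fun j n => ((starRingEnd ℂ) (w j)) ^ n)) ∧
    (∑' α : ℕ →₀ ℕ,
        (((α.sum fun _ n => n).factorial : ℂ) / (α.prod fun _ n => (n.factorial : ℂ))) *
          (α.prod fun j n => (z j) ^ n) * (α.prod fun j n => ((starRingEnd ℂ) (w j)) ^ n)) =
      (1 - ∑' j : ℕ, z j * (starRingEnd ℂ) (w j))⁻¹ := by
  classical
  set u : ℕ → ℂ := fun j => z j * (starRingEnd ℂ) (w j) with hu_def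
  have hnormu : ∀ j, ‖u j‖ = ‖z j‖ * ‖w j‖ := by
    intro j
    rw [hu_def, norm_mul, RCLike.norm_conj]
  set Z := ∑' j : ℕ, ‖z j‖ ^ 2 with hZ
  set W := ∑' j : ℕ, ‖w j‖ ^ 2 with hW
  have Z0 : 0 ≤ Z := tsum_nonneg fun j => sq_nonneg _
  have W0 : 0 ≤ W := tsum_nonneg fun j => sq_nonneg _
  have hZW : Z * W < 1 := by nlinarith
  have hc1 : Real.sqrt (Z * W) < 1 := by
    have := Real.sqrt_lt_sqrt (by positivity) hZW
    rwa [Real.sqrt_one] at this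
  have hbound : ∀ s : Finset ℕ, (∑ j ∈ s, ‖u j‖) ≤ Real.sqrt (Z * W) := by
    intro s
    have hcs := Finset.sum_mul_sq_le_sq_mul_sq s (fun j => ‖z j‖) (fun j => ‖w j‖)
    have hZs : (∑ j ∈ s, ‖z j‖ ^ 2) ≤ Z := Summable.sum_le_tsum s (fun j _ => sq_nonneg _) hz
    have hWs : (∑ j ∈ s, ‖w j‖ ^ 2) ≤ W := Summable.sum_le_tsum s (fun j _ => sq_nonneg _) hw
    have hsq : (∑ j ∈ s, ‖z j‖ * ‖w j‖) ^ 2 ≤ Z * W := by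
      refine hcs.trans (mul_le_mul hZs hWs (Finset.sum_nonneg fun j _ => sq_nonneg _) Z0)
    have h1 : (∑ j ∈ s, ‖u j‖) = ∑ j ∈ s, ‖z j‖ * ‖w j‖ :=
      Finset.sum_congr rfl fun j _ => hnormu j
    rw [h1]
    have h2 := Real.sqrt_le_sqrt hsq
    rwa [Real.sqrt_sq (Finset.sum_nonneg fun j _ =>
      mul_nonneg (norm_nonneg _) (norm_nonneg _))] at h2
  have hv : Summable fun j => ‖u j‖ :=
    summable_of_sum_le (fun j => norm_nonneg _) hbound
  have hr : (∑' j, ‖u j‖) < 1 :=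
    lt_of_le_of_lt (Summable.tsum_le_of_sum_le hv hbound) hc1
  obtain ⟨hsum, heq⟩ := aux_main u hv hr
  have hfun : (fun α : ℕ →₀ ℕ =>
      (((α.sum fun _ n => n).factorial : ℂ) / (α.prod fun _ n => (n.factorial : ℂ))) *
        (α.prod fun j n => (z j) ^ n) * (α.prod fun j n => ((starRingEnd ℂ) (w j)) ^ n))
      = Fm u := by
    funext α
    rw [Fm, cast_multinomial_c α, mul_assoc]
    congr 1
    rw [← Finsupp.prod_mul]
    refine Finsupp.prod_congr fun j _ => ?_
    rw [hu_def, mul_pow]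
  refine ⟨?_, ?_, ?_⟩
  · exact lt_of_le_of_lt (norm_tsum_le_tsum_norm hv) hr
  · rw [hfun]; exact hsum
  · rw [hfun]; exact heq
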